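/- With the setting of the previous statement, let $u_N \in \mathcal{M}_N$ satisfy $\mathcal{E}(u_N) = \min_{\mathcal{M}_N}\mathcal{E}$ for each $N$. Then $(u_N)$ has a subsequence converging pointwise to some $u \in \mathcal{M}$ with $\mathcal{E}(u) = \min_{\mathcal{M}}\mathcal{E}$. -/
import Mathlib


open Filter
open scoped ENNReal

/-- the set `𝓜` of odd, nondecreasing profiles with values in `[-1,1]`. -/
def IsM (u : ℤ → ℝ) : Prop :=
  (∀ j, u (-j) = - u j) ∧ Monotone u ∧ ∀ j, u j ∈ Set.Icc (-1 : ℝ) 1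

/-- the energy functional `𝓔(u) = ∑ F(u_j) + β ∑ (u_{j+1}-u_j)²` with values in `[0,∞]`. -/
noncomputable def energy (F : ℝ → ℝ) (β : ℝ) (u : ℤ → ℝ) : ℝ≥0∞ :=
  (∑' j : ℤ, ENNReal.ofReal (F (u j))) +
    ENNReal.ofReal β * ∑' j : ℤ, ENNReal.ofReal ((u (j + 1) - u j) ^ 2)

/-- sign of an integer index: `1` for `j ≥ 0`, `-1` for `j < 0`. -/
noncomputable def sgnZ (j : ℤ) : ℝ := if 0 ≤ j then 1 else -1

/-- the Ritz set `𝓜_N` of profiles agreeing with the shock profile for `|j| > N`. -/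
noncomputable def IsMN (N : ℕ) (u : ℤ → ℝ) : Prop :=
  IsM u ∧ ∀ j : ℤ, (N : ℤ) < |j| → u j = sgnZ j


/-- pointwise term of the energy -/
noncomputable def eterm (F : ℝ → ℝ) (β : ℝ) (u : ℤ → ℝ) (j : ℤ) : ℝ≥0∞ :=
  ENNReal.ofReal (F (u j)) + ENNReal.ofReal β * ENNReal.ofReal ((u (j + 1) - u j) ^ 2)

lemma energy_eq_tsum (F : ℝ → ℝ) (β : ℝ) (u : ℤ → ℝ) :
    energy F β u = ∑' j : ℤ, eterm F β u j := by
  rw [energy, ← ENNReal.tsum_mul_left, ← ENNReal.tsum_add]; rfl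

lemma tsum_le_liminf_tsum {g : ℕ → ℤ → ℝ≥0∞} {f : ℤ → ℝ≥0∞}
    (h : ∀ j, Tendsto (fun n => g n j) atTop (nhds (f j))) :
    ∑' j, f j ≤ liminf (fun n => ∑' j, g n j) atTop := by
  rw [ENNReal.tsum_eq_iSup_sum]
  refine iSup_le fun s => ?_
  have ht : Tendsto (fun n => ∑ j ∈ s, g n j) atTop (nhds (∑ j ∈ s, f j)) :=
    tendsto_finset_sum _ fun j _ => h j
  calc ∑ j ∈ s, f j = liminf (fun n => ∑ j ∈ s, g n j) atTop := ht.liminf_eq.symm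
    _ ≤ liminf (fun n => ∑' j, g n j) atTop :=
        liminf_le_liminf (Eventually.of_forall fun n => ENNReal.sum_le_tsum s)

/-- truncation of a profile to `𝓜_N`. -/
noncomputable def trunc (N : ℕ) (v : ℤ → ℝ) (j : ℤ) : ℝ :=
  if j < -(N : ℤ) then -1 else if j ≤ (N : ℤ) then v j else 1

lemma trunc_of_lt {N : ℕ} {j : ℤ} (v : ℤ → ℝ) (h : j < -(N : ℤ)) : trunc N v j = -1 := by
  simp [trunc, h]

lemma trunc_of_mem {N : ℕ} {j : ℤ} (v : ℤ → ℝ) (h1 : -(N : ℤ) ≤ j) (h2 : j ≤ N) :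
    trunc N v j = v j := by
  simp [trunc, not_lt.2 h1, h2]

lemma trunc_of_gt {N : ℕ} {j : ℤ} (v : ℤ → ℝ) (h : (N : ℤ) < j) : trunc N v j = 1 := by
  have h1 : ¬ j < -(N:ℤ) := by omega
  have h2 : ¬ j ≤ (N:ℤ) := by omega
  simp [trunc, h1, h2]

lemma isMN_trunc (N : ℕ) {v : ℤ → ℝ} (hv : IsM v) : IsMN N (trunc N v) := by
  obtain ⟨hodd, hmono, hmem⟩ := hv
  have h1le : ∀ j, v j ≤ 1 := fun j => (hmem j).2
  have hle1 : ∀ j, -1 ≤ v j := fun j => (hmem j).1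
  refine ⟨⟨?_, ?_, ?_⟩, ?_⟩
  · intro j
    rcases lt_trichotomy j (-(N:ℤ)) with h | h | h
    · rw [trunc_of_lt (j := j) v h, trunc_of_gt (j := -j) v (by omega)]; norm_num
    · subst h
      rw [neg_neg, trunc_of_mem (j := (N:ℤ)) v (by omega) le_rfl,
        trunc_of_mem (j := -(N:ℤ)) v le_rfl (by omega), hodd]
      ring
    · rcases le_or_gt j (N : ℤ) with h2 | h2
      · rw [trunc_of_mem (j := j) v (by omega) h2,
          trunc_of_mem (j := -j) v (by omega) (by omega), hodd]
      · rw [trunc_of_gt (j := j) v h2, trunc_of_lt (j := -j) v (by omega)]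
  · intro j k hjk
    rcases lt_or_ge j (-(N:ℤ)) with hj | hj
    · rw [trunc_of_lt v hj]
      rcases lt_or_ge k (-(N:ℤ)) with hk | hk
      · rw [trunc_of_lt v hk]
      · rcases le_or_gt k (N:ℤ) with hk2 | hk2
        · rw [trunc_of_mem v hk hk2]; exact hle1 k
        · rw [trunc_of_gt v hk2]; linarith
    · rcases le_or_gt j (N:ℤ) with hj2 | hj2
      · rw [trunc_of_mem v hj hj2]
        rcases le_or_gt k (N:ℤ) with hk2 | hk2
        · rw [trunc_of_mem v (by omega) hk2]; exact hmono hjk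
        · rw [trunc_of_gt v hk2]; exact h1le j
      · rw [trunc_of_gt v hj2, trunc_of_gt v (by omega)]
  · intro j
    rcases lt_or_ge j (-(N:ℤ)) with hj | hj
    · rw [trunc_of_lt v hj]; exact ⟨le_rfl, by norm_num⟩
    · rcases le_or_gt j (N:ℤ) with hj2 | hj2
      · rw [trunc_of_mem v hj hj2]; exact hmem j
      · rw [trunc_of_gt v hj2]; exact ⟨by norm_num, le_rfl⟩
  · intro j hj
    rcases lt_or_ge j 0 with hj0 | hj0
    · have h' : (N:ℤ) < -j := by rwa [abs_of_neg hj0] at hj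
      rw [trunc_of_lt (j := j) v (by omega), sgnZ, if_neg (by omega)]
    · have h' : (N:ℤ) < j := by rwa [abs_of_nonneg hj0] at hj
      rw [trunc_of_gt (j := j) v h', sgnZ, if_pos hj0]

lemma energy_trunc_le (F : ℝ → ℝ) (β : ℝ) (hβ : 0 ≤ β)
    (hF1 : F 1 = 0) (hFm1 : F (-1) = 0) (N : ℕ) {v : ℤ → ℝ} (hv : IsM v) :
    energy F β (trunc N v) ≤ energy F β v +
      ENNReal.ofReal β * (ENNReal.ofReal ((1 - v N) ^ 2) + ENNReal.ofReal ((v (-(N:ℤ)) + 1) ^ 2)) := by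
  set X := ENNReal.ofReal ((1 - v N) ^ 2)
  set Y := ENNReal.ofReal ((v (-(N:ℤ)) + 1) ^ 2)
  have hA : (∑' j : ℤ, ENNReal.ofReal (F (trunc N v j))) ≤ ∑' j : ℤ, ENNReal.ofReal (F (v j)) := by
    refine ENNReal.tsum_le_tsum fun j => ?_
    rcases lt_or_ge j (-(N:ℤ)) with hj | hj
    · rw [trunc_of_lt v hj, hFm1]; simp
    · rcases le_or_gt j (N:ℤ) with hj2 | hj2
      · rw [trunc_of_mem v hj hj2]
      · rw [trunc_of_gt v hj2, hF1]; simp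
  have hB : (∑' j : ℤ, ENNReal.ofReal ((trunc N v (j+1) - trunc N v j) ^ 2)) ≤
      (∑' j : ℤ, ENNReal.ofReal ((v (j+1) - v j) ^ 2)) + (X + Y) := by
    have hpt : ∀ j : ℤ, ENNReal.ofReal ((trunc N v (j+1) - trunc N v j) ^ 2) ≤
        ENNReal.ofReal ((v (j+1) - v j) ^ 2) +
          ((if j = (N:ℤ) then X else 0) + (if j = -(N:ℤ) - 1 then Y else 0)) := by
      intro j
      rcases lt_trichotomy j (-(N:ℤ) - 1) with hj | hj | hj
      · rw [trunc_of_lt (j := j + 1) v (by omega), trunc_of_lt (j := j) v (by omega)]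
        simp
      · subst hj
        rw [trunc_of_lt (j := -(N:ℤ) - 1) v (by omega),
          trunc_of_mem (j := -(N:ℤ) - 1 + 1) v (by omega) (by omega)]
        rw [if_neg (by omega), if_pos rfl]
        have hY : ENNReal.ofReal ((v (-(N:ℤ) - 1 + 1) - -1) ^ 2) = Y := by
          norm_num [Y]
        rw [hY, zero_add]
        exact le_add_self
      · rcases lt_trichotomy j (N:ℤ) with hj2 | hj2 | hj2
        · rw [trunc_of_mem (j := j + 1) v (by omega) (by omega),
            trunc_of_mem (j := j) v (by omega) (by omega)]
          exact le_add_right le_rfl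
        · subst hj2
          rw [trunc_of_gt (j := (N:ℤ) + 1) v (by omega),
            trunc_of_mem (j := (N:ℤ)) v (by omega) le_rfl]
          rw [if_pos rfl, if_neg (by omega), add_zero]
          exact le_add_self
        · rw [trunc_of_gt (j := j + 1) v (by omega), trunc_of_gt (j := j) v (by omega)]
          simp
    calc (∑' j : ℤ, ENNReal.ofReal ((trunc N v (j+1) - trunc N v j) ^ 2)) ≤
        ∑' j : ℤ, (ENNReal.ofReal ((v (j+1) - v j) ^ 2) +
          ((if j = (N:ℤ) then X else 0) + (if j = -(N:ℤ) - 1 then Y else 0))) :=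
        ENNReal.tsum_le_tsum hpt
      _ = (∑' j : ℤ, ENNReal.ofReal ((v (j+1) - v j) ^ 2)) +
          ((∑' j : ℤ, if j = (N:ℤ) then X else 0) + (∑' j : ℤ, if j = -(N:ℤ) - 1 then Y else 0)) := by
          rw [ENNReal.tsum_add, ENNReal.tsum_add]
      _ = (∑' j : ℤ, ENNReal.ofReal ((v (j+1) - v j) ^ 2)) + (X + Y) := by
          rw [tsum_ite_eq, tsum_ite_eq]
  calc energy F β (trunc N v) ≤
      (∑' j : ℤ, ENNReal.ofReal (F (v j))) +
        ENNReal.ofReal β * ((∑' j : ℤ, ENNReal.ofReal ((v (j+1) - v j) ^ 2)) + (X + Y)) :=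
      add_le_add hA (mul_le_mul_right hB _)
    _ = energy F β v + ENNReal.ofReal β * (X + Y) := by
      rw [mul_add, energy, add_assoc]

lemma tendsto_one_of_finite (F : ℝ → ℝ)
    (hFcont : ContinuousOn F (Set.Icc (-1 : ℝ) 1))
    (hFpos : ∀ η ∈ Set.Ioo (-1 : ℝ) 1, 0 < F η)
    {v : ℤ → ℝ} (hv : IsM v)
    (hfin : (∑' j : ℤ, ENNReal.ofReal (F (v j))) ≠ ⊤) :
    Tendsto v atTop (nhds 1) := by
  obtain ⟨hodd, hmono, hmem⟩ := hv
  have hbdd : BddAbove (Set.range v) := ⟨1, by rintro _ ⟨j, rfl⟩; exact (hmem j).2⟩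
  set L := ⨆ j, v j with hL
  have htend : Tendsto v atTop (nhds L) := tendsto_atTop_ciSup hmono hbdd
  have hv0 : v 0 = 0 := by have := hodd 0; simp at this; linarith
  have hL0 : 0 ≤ L := hv0 ▸ le_ciSup hbdd 0
  have hL1 : L ≤ 1 := ciSup_le fun j => (hmem j).2
  rcases eq_or_lt_of_le hL1 with h | h
  · rwa [h] at htend
  · exfalso
    have hLmem : L ∈ Set.Icc (-1:ℝ) 1 := ⟨by linarith, hL1⟩
    have hcw : ContinuousWithinAt F (Set.Icc (-1:ℝ) 1) L := hFcont L hLmem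
    have htendF : Tendsto (fun j => F (v j)) atTop (nhds (F L)) := by
      refine hcw.tendsto.comp ?_
      exact tendsto_nhdsWithin_of_tendsto_nhds_of_eventually_within _ htend
        (Eventually.of_forall fun j => hmem j)
    have htendo : Tendsto (fun j => ENNReal.ofReal (F (v j))) atTop (nhds (ENNReal.ofReal (F L))) :=
      (ENNReal.continuous_ofReal.tendsto _).comp htendF
    have hzero : Tendsto (fun j => ENNReal.ofReal (F (v j))) atTop (nhds 0) := by
      refine (ENNReal.tendsto_cofinite_zero_of_tsum_ne_top hfin).mono_left ?_
      rw [Int.cofinite_eq]; exact le_sup_right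
    have := tendsto_nhds_unique htendo hzero
    have hFL : 0 < F L := hFpos L ⟨by linarith, h⟩
    rw [ENNReal.ofReal_eq_zero] at this
    linarith


/-- a sequence of Ritz minimizers has a subsequence converging
pointwise to a global minimizer of the energy on `𝓜`. -/
theorem stmt11 (F : ℝ → ℝ) (β : ℝ) (hβ : 0 < β)
    (hFcont : ContinuousOn F (Set.Icc (-1 : ℝ) 1))
    (hFnonneg : ∀ η ∈ Set.Icc (-1 : ℝ) 1, 0 ≤ F η)
    (hFpos : ∀ η ∈ Set.Ioo (-1 : ℝ) 1, 0 < F η)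
    (hF1 : F 1 = 0) (hFm1 : F (-1) = 0)
    (U : ℕ → ℤ → ℝ)
    (hU : ∀ N, IsMN N (U N))
    (hUmin : ∀ N, energy F β (U N) = ⨅ (u : ℤ → ℝ) (_ : IsMN N u), energy F β u) :
    ∃ φ : ℕ → ℕ, StrictMono φ ∧ ∃ u : ℤ → ℝ, IsM u ∧
      (∀ j : ℤ, Tendsto (fun n => U (φ n) j) atTop (nhds (u j))) ∧
      energy F β u = ⨅ (u' : ℤ → ℝ) (_ : IsM u'), energy F β u' := by
  set x : ℕ → ∀ _ : ℤ, (Set.Icc (-1:ℝ) 1) := fun N j => ⟨U N j, (hU N).1.2.2 j⟩ with hx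
  obtain ⟨a, φ, hφ, ha⟩ := SeqCompactSpace.tendsto_subseq x
  set u : ℤ → ℝ := fun j => (a j : ℝ) with hu
  have hpt : ∀ j, Tendsto (fun n => U (φ n) j) atTop (nhds (u j)) := fun j =>
    (continuous_subtype_val.tendsto (a j)).comp (tendsto_pi_nhds.mp ha j)
  have hodd : ∀ j, u (-j) = - u j := fun j =>
    tendsto_nhds_unique (hpt (-j))
      (Tendsto.congr (fun n => ((hU (φ n)).1.1 j).symm) (hpt j).neg)
  have hmono : Monotone u := fun j k hjk =>
    le_of_tendsto_of_tendsto' (hpt j) (hpt k) fun n => (hU (φ n)).1.2.1 hjk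
  have hmem : ∀ j, u j ∈ Set.Icc (-1:ℝ) 1 := fun j => (a j).2
  have huM : IsM u := ⟨hodd, hmono, hmem⟩
  have hterm : ∀ j, Tendsto (fun n => eterm F β (U (φ n)) j) atTop (nhds (eterm F β u j)) := by
    intro j
    have hF' : Tendsto (fun n => F (U (φ n) j)) atTop (nhds (F (u j))) :=
      (hFcont (u j) (hmem j)).tendsto.comp
        (tendsto_nhdsWithin_of_tendsto_nhds_of_eventually_within _ (hpt j)
          (Eventually.of_forall fun n => (hU (φ n)).1.2.2 j))
    have hsq : Tendsto (fun n => (U (φ n) (j+1) - U (φ n) j) ^ 2) atTop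
        (nhds ((u (j+1) - u j) ^ 2)) := ((hpt (j+1)).sub (hpt j)).pow 2
    exact (ENNReal.tendsto_ofReal hF').add
      (ENNReal.Tendsto.const_mul (ENNReal.tendsto_ofReal hsq) (Or.inr ENNReal.ofReal_ne_top))
  have hlsc : energy F β u ≤ liminf (fun n => energy F β (U (φ n))) atTop := by
    simp_rw [energy_eq_tsum]
    exact tsum_le_liminf_tsum hterm
  refine ⟨φ, hφ, u, huM, hpt, le_antisymm (le_iInf fun v => le_iInf fun hv => ?_)
    (iInf_le_of_le u (iInf_le _ huM))⟩
  by_cases htop : energy F β v = ⊤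
  · rw [htop]; exact le_top
  have hA : (∑' j : ℤ, ENNReal.ofReal (F (v j))) ≠ ⊤ :=
    ne_top_of_le_ne_top htop (by rw [energy]; exact le_add_right le_rfl)
  have htend1 : Tendsto v atTop (nhds 1) := tendsto_one_of_finite F hFcont hFpos hv hA
  have hφZ : Tendsto (fun n => ((φ n : ℤ))) atTop atTop :=
    tendsto_natCast_atTop_atTop.comp hφ.tendsto_atTop
  have hv1 : Tendsto (fun n => v (φ n)) atTop (nhds 1) := htend1.comp hφZ
  have hv2 : Tendsto (fun n => v (-(φ n : ℤ))) atTop (nhds (-1)) :=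
    Tendsto.congr (fun n => (hv.1 _).symm) hv1.neg
  have hX0 : Tendsto (fun n => ENNReal.ofReal ((1 - v (φ n)) ^ 2)) atTop (nhds 0) := by
    have := ENNReal.tendsto_ofReal (((tendsto_const_nhds (x := (1:ℝ))).sub hv1).pow 2)
    simpa using this
  have hY0 : Tendsto (fun n => ENNReal.ofReal ((v (-(φ n : ℤ)) + 1) ^ 2)) atTop (nhds 0) := by
    have := ENNReal.tendsto_ofReal ((hv2.add (tendsto_const_nhds (x := (1:ℝ)))).pow 2)
    simpa using this
  have hXY : Tendsto (fun n : ℕ => ENNReal.ofReal β *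
      (ENNReal.ofReal ((1 - v (φ n)) ^ 2) + ENNReal.ofReal ((v (-(φ n : ℤ)) + 1) ^ 2)))
      atTop (nhds 0) := by
    have := ENNReal.Tendsto.const_mul (a := ENNReal.ofReal β) (hX0.add hY0)
      (Or.inr ENNReal.ofReal_ne_top)
    simpa using this
  have hchain : ∀ n, energy F β (U (φ n)) ≤ energy F β v +
      ENNReal.ofReal β * (ENNReal.ofReal ((1 - v (φ n)) ^ 2) +
        ENNReal.ofReal ((v (-(φ n : ℤ)) + 1) ^ 2)) := by
    intro n
    calc energy F β (U (φ n)) = ⨅ (w : ℤ → ℝ) (_ : IsMN (φ n) w), energy F β w := hUmin (φ n)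
      _ ≤ energy F β (trunc (φ n) v) := iInf_le_of_le _ (iInf_le _ (isMN_trunc (φ n) hv))
      _ ≤ _ := energy_trunc_le F β hβ.le hF1 hFm1 (φ n) hv
  have hlim : liminf (fun n => energy F β (U (φ n))) atTop ≤ energy F β v := by
    have htot : Tendsto (fun n => energy F β v +
        ENNReal.ofReal β * (ENNReal.ofReal ((1 - v (φ n)) ^ 2) +
          ENNReal.ofReal ((v (-(φ n : ℤ)) + 1) ^ 2))) atTop (nhds (energy F β v + 0)) :=
      tendsto_const_nhds.add hXY
    calc liminf (fun n => energy F β (U (φ n))) atTop ≤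
        liminf (fun n => energy F β v +
          ENNReal.ofReal β * (ENNReal.ofReal ((1 - v (φ n)) ^ 2) +
            ENNReal.ofReal ((v (-(φ n : ℤ)) + 1) ^ 2))) atTop :=
        liminf_le_liminf (Eventually.of_forall hchain)
      _ = energy F β v + 0 := htot.liminf_eq
      _ = energy F β v := add_zero _
  exact hlsc.trans hlim
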